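/- Let ψ ∈ Ψ(a,b). Then the fundamental function φ(s) = sup_{p ∈ (a,b)} s^{1/p}/ψ(p) of G(ψ) satisfies lim_{s → ∞} (log φ(s))/(log s) = 1/a. -/

import Mathlib

noncomputable section

open MeasureTheory Filter Set Topology
open scoped ENNReal NNReal

/-- The set of exponents `p` with `a < p < b` (where `b : ℝ≥0∞` may be `∞`). -/
def expSet (a : ℝ) (b : ℝ≥0∞) : Set ℝ := {p : ℝ | a < p ∧ ENNReal.ofReal p < b}

/-- The filter of real exponents `p` tending to `b` from below (`p → b⁻`);
when `b = ∞` this amounts to `p → ∞`. -/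
def atBbelow (b : ℝ≥0∞) : Filter ℝ :=
  Filter.comap ENNReal.ofReal (nhdsWithin b (Set.Iio b))

/-- The class `EΨ(a,b)`: continuous `ψ` on `(a,b)` with `ψ(p) ≥ 1` and `ψ(b-0) = ∞`. -/
def IsEPsi (a : ℝ) (b : ℝ≥0∞) (ψ : ℝ → ℝ) : Prop :=
  ContinuousOn ψ (expSet a b) ∧ (∀ p ∈ expSet a b, 1 ≤ ψ p) ∧
    Filter.Tendsto ψ (atBbelow b) Filter.atTop

/-- Norm of the Bilateral Grand Lebesgue space `G(ψ; a, b)` over a measure `μ`: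
`‖f‖_{G(ψ)} = sup_{p ∈ (a,b)} ‖f‖_{L^p(μ)} / ψ(p)`, with values in `ℝ≥0∞`. -/
def GNorm {α : Type*} [MeasurableSpace α] (μ : Measure α) (a : ℝ) (b : ℝ≥0∞)
    (ψ : ℝ → ℝ) (f : α → ℝ) : ℝ≥0∞ :=
  ⨆ p ∈ expSet a b, eLpNorm f (ENNReal.ofReal p) μ / ENNReal.ofReal (ψ p)

/-- The class `Ψ(a,b)` (relative to a measure `μ`): positive continuous `ψ` on `(a,b)`
with `ψ(b-0) = ∞`, admitting a representation `ψ(p) = ‖f‖_{L^p(μ)}` for `p ∈ (a,b)`, where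
the measurable `f` lies in `L^p(μ)` for all `p ∈ (a,b)`. -/
def IsPsi {α : Type*} [MeasurableSpace α] (μ : Measure α) (a : ℝ) (b : ℝ≥0∞)
    (ψ : ℝ → ℝ) : Prop :=
  ContinuousOn ψ (expSet a b) ∧ (∀ p ∈ expSet a b, 0 < ψ p) ∧
    Filter.Tendsto ψ (atBbelow b) Filter.atTop ∧
    ∃ f : α → ℝ, AEStronglyMeasurable f μ ∧
      ∀ p ∈ expSet a b, eLpNorm f (ENNReal.ofReal p) μ = ENNReal.ofReal (ψ p)

/-- The fundamental function `φ(G(ψ;a,b), s) = sup_{p ∈ (a,b)} s^{1/p}/ψ(p)`, real-valued. -/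
def fundR (a : ℝ) (b : ℝ≥0∞) (ψ : ℝ → ℝ) (s : ℝ) : ℝ :=
  ⨆ p : expSet a b, s ^ (1 / (p : ℝ)) / ψ p

/-- The fundamental function `φ(G(ψ;a,b), δ) = sup_{p ∈ (a,b)} δ^{1/p}/ψ(p)`, `ℝ≥0∞`-valued. -/
def fundE (a : ℝ) (b : ℝ≥0∞) (ψ : ℝ → ℝ) (δ : ℝ≥0∞) : ℝ≥0∞ :=
  ⨆ p ∈ expSet a b, δ ^ (1 / p) / ENNReal.ofReal (ψ p)


lemma expSet_nonempty' (a : ℝ) (b : ℝ≥0∞) (ha : 1 ≤ a) (hab : ENNReal.ofReal a < b) :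
    ∃ p, p ∈ expSet a b := by
  have ha0 : (0:ℝ) < a := lt_of_lt_of_le one_pos ha
  by_cases hb : b = ⊤
  · exact ⟨a + 1, by linarith, by simp [hb]⟩
  · have hlt : a < b.toReal := (ENNReal.ofReal_lt_iff_lt_toReal ha0.le hb).mp hab
    refine ⟨(a + b.toReal)/2, by linarith, ?_⟩
    · have h2 : (a + b.toReal)/2 < b.toReal := by linarith
      calc ENNReal.ofReal ((a + b.toReal)/2) < ENNReal.ofReal b.toReal :=
            (ENNReal.ofReal_lt_ofReal_iff (by linarith)).mpr h2
        _ = b := ENNReal.ofReal_toReal hb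

lemma psi_lower {α : Type*} [MeasurableSpace α] (μ : Measure α)
    (a : ℝ) (b : ℝ≥0∞) (ha : 1 ≤ a) (hab : ENNReal.ofReal a < b)
    (ψ : ℝ → ℝ) (hψ : IsPsi μ a b ψ) :
    ∃ m > 0, ∀ p ∈ expSet a b, m ≤ ψ p := by
  have ha0 : (0:ℝ) < a := lt_of_lt_of_le one_pos ha
  obtain ⟨-, hpos, -, f, hf, hrep⟩ := hψ
  obtain ⟨p₁, hp₁⟩ := expSet_nonempty' a b ha hab
  have h0p₁ : 0 < p₁ := ha0.trans hp₁.1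
  have hψ₁ : 0 < ψ p₁ := hpos p₁ hp₁
  have hE : eLpNorm f (ENNReal.ofReal p₁) μ = ENNReal.ofReal (ψ p₁) := hrep p₁ hp₁
  have hne0₁ : ENNReal.ofReal p₁ ≠ 0 := (ENNReal.ofReal_pos.2 h0p₁).ne'
  -- f is not a.e. zero
  have hfne : ¬ f =ᵐ[μ] 0 := by
    intro h
    have h0 : eLpNorm f (ENNReal.ofReal p₁) μ = 0 := by
      rw [eLpNorm_congr_ae h, eLpNorm_zero]
    rw [hE] at h0
    exact absurd h0 (ENNReal.ofReal_pos.2 hψ₁).ne'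
  have hμ0 : μ {x | f x ≠ 0} ≠ 0 := by
    intro h
    apply hfne
    rw [Filter.EventuallyEq, ae_iff]
    simpa using h
  -- find t > 0 with μ {x | ofReal t ≤ ‖f x‖₊} ≠ 0
  have hsub : {x | f x ≠ 0} ⊆
      ⋃ n : ℕ, {x | ENNReal.ofReal (1/((n:ℝ)+1)) ≤ (‖f x‖₊ : ℝ≥0∞)} := by
    intro x hx
    have hfx : 0 < ‖f x‖ := norm_pos_iff.mpr hx
    obtain ⟨n, hn⟩ := exists_nat_one_div_lt hfx
    refine Set.mem_iUnion.2 ⟨n, ?_⟩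
    show ENNReal.ofReal (1/((n:ℝ)+1)) ≤ (‖f x‖₊ : ℝ≥0∞)
    exact (ENNReal.ofReal_le_ofReal hn.le).trans_eq (ofReal_norm _)
  obtain ⟨n, hn⟩ : ∃ n : ℕ, μ {x | ENNReal.ofReal (1/((n:ℝ)+1)) ≤ (‖f x‖₊ : ℝ≥0∞)} ≠ 0 := by
    by_contra h
    push_neg at h
    exact hμ0 (measure_mono_null hsub (measure_iUnion_null h))
  set t : ℝ := 1/((n:ℝ)+1) with ht_def
  have ht : 0 < t := by positivity
  set A := {x | ENNReal.ofReal t ≤ (‖f x‖₊ : ℝ≥0∞)} with hA_def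
  have hεne0 : ENNReal.ofReal t ≠ 0 := (ENNReal.ofReal_pos.2 ht).ne'
  -- μ A is finite, via Chebyshev at p₁
  have hAfin : μ A ≠ ⊤ := by
    have hcheb := meas_ge_le_mul_pow_eLpNorm_enorm μ hne0₁ ENNReal.ofReal_ne_top hf hεne0 (by simp)
    rw [hE] at hcheb
    refine ne_top_of_le_ne_top ?_ hcheb
    exact ENNReal.mul_ne_top
      (ENNReal.rpow_ne_top_of_nonneg ENNReal.toReal_nonneg
        (by simp [ENNReal.inv_ne_top, hεne0]))
      (ENNReal.rpow_ne_top_of_nonneg ENNReal.toReal_nonneg ENNReal.ofReal_ne_top)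
  set μ₀ : ℝ := (μ A).toReal with hμ₀_def
  have hμ₀pos : 0 < μ₀ := ENNReal.toReal_pos hn hAfin
  refine ⟨t * min 1 (μ₀ ^ (1/a)),
    mul_pos ht (lt_min one_pos (Real.rpow_pos_of_pos hμ₀pos _)), ?_⟩
  intro p hp
  have h0p : 0 < p := ha0.trans hp.1
  have hne0 : ENNReal.ofReal p ≠ 0 := (ENNReal.ofReal_pos.2 h0p).ne'
  -- Chebyshev lower bound at p
  have key : ENNReal.ofReal t * μ A ^ (1/p) ≤ ENNReal.ofReal (ψ p) := by
    have h1 := mul_meas_ge_le_pow_eLpNorm' μ hne0 ENNReal.ofReal_ne_top hf (ENNReal.ofReal t)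
    rw [ENNReal.toReal_ofReal h0p.le, hrep p hp] at h1
    have h2 := ENNReal.rpow_le_rpow h1 (by positivity : (0:ℝ) ≤ 1/p)
    rwa [ENNReal.mul_rpow_of_nonneg _ _ (by positivity : (0:ℝ) ≤ 1/p),
      ← ENNReal.rpow_mul, ← ENNReal.rpow_mul,
      mul_one_div_cancel h0p.ne', ENNReal.rpow_one, ENNReal.rpow_one] at h2
  have keyR : t * μ₀ ^ (1/p) ≤ ψ p := by
    have h3 := ENNReal.toReal_mono ENNReal.ofReal_ne_top key
    rwa [ENNReal.toReal_mul, ENNReal.toReal_ofReal ht.le, ← ENNReal.toReal_rpow,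
      ENNReal.toReal_ofReal (hpos p hp).le] at h3
  refine le_trans ?_ keyR
  have hmin : min 1 (μ₀ ^ (1/a)) ≤ μ₀ ^ (1/p) := by
    rcases le_total 1 μ₀ with h1 | h1
    · refine le_trans (min_le_left _ _) ?_
      calc (1:ℝ) = 1 ^ (1/p) := (Real.one_rpow _).symm
        _ ≤ μ₀ ^ (1/p) := Real.rpow_le_rpow zero_le_one h1 (by positivity)
    · refine le_trans (min_le_right _ _) ?_
      exact Real.rpow_le_rpow_of_exponent_ge hμ₀pos h1
        (one_div_le_one_div_of_le ha0 hp.1.le)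
  exact mul_le_mul_of_nonneg_left hmin ht.le

/-- **Lemma 3, behaviour at `∞`.** Let `ψ ∈ Ψ(a,b)`. Then the fundamental
function `φ(s) = sup_{p ∈ (a,b)} s^{1/p}/ψ(p)` of `G(ψ)` satisfies
`log φ(s) / log s → 1/a` as `s → ∞`. -/
theorem fund_log_limit_at_top {α : Type*} [MeasurableSpace α] (μ : Measure α) [SigmaFinite μ]
    (a : ℝ) (b : ℝ≥0∞) (ha : 1 ≤ a) (hab : ENNReal.ofReal a < b)
    (ψ : ℝ → ℝ) (hψ : IsPsi μ a b ψ) :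
    Tendsto (fun s : ℝ => Real.log (fundR a b ψ s) / Real.log s) atTop (𝓝 (1 / a)) := by
  have ha0 : (0:ℝ) < a := lt_of_lt_of_le one_pos ha
  obtain ⟨m, hm, hml⟩ := psi_lower μ a b ha hab ψ hψ
  have hpos := hψ.2.1
  obtain ⟨p₁, hp₁⟩ := expSet_nonempty' a b ha hab
  haveI : Nonempty ↥(expSet a b) := ⟨⟨p₁, hp₁⟩⟩
  -- uniform upper bound for each term, for s ≥ 1
  have hub : ∀ s : ℝ, 1 ≤ s → ∀ p ∈ expSet a b,
      s ^ (1/p) / ψ p ≤ s ^ (1/a) / m := by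
    intro s hs p hp
    have h0p : 0 < p := ha0.trans hp.1
    have h1 : s ^ (1/p) ≤ s ^ (1/a) :=
      Real.rpow_le_rpow_of_exponent_le hs (one_div_le_one_div_of_le ha0 hp.1.le)
    exact div_le_div₀ (Real.rpow_nonneg (by linarith) _) h1 hm (hml p hp)
  have hbdd : ∀ s : ℝ, 1 ≤ s →
      BddAbove (Set.range fun p : expSet a b => s ^ (1/(p:ℝ)) / ψ p) := by
    intro s hs
    refine ⟨s ^ (1/a) / m, ?_⟩
    rintro _ ⟨⟨p, hp⟩, rfl⟩
    exact hub s hs p hp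
  have hU : ∀ s : ℝ, 1 ≤ s → fundR a b ψ s ≤ s ^ (1/a) / m := by
    intro s hs
    exact ciSup_le fun ⟨p, hp⟩ => hub s hs p hp
  have hL : ∀ s : ℝ, 1 ≤ s → ∀ p ∈ expSet a b,
      s ^ (1/p) / ψ p ≤ fundR a b ψ s := by
    intro s hs p hp
    exact le_ciSup (hbdd s hs) (⟨p, hp⟩ : expSet a b)
  rw [Metric.tendsto_nhds]
  intro ε hε
  -- choose p₀ close to a
  obtain ⟨p₀, hp₀S, hp₀close⟩ : ∃ p ∈ expSet a b, 1/a - ε/2 ≤ 1/p := by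
    refine ⟨min p₁ (a + ε/2), ⟨lt_min hp₁.1 (by linarith), ?_⟩, ?_⟩
    · exact lt_of_le_of_lt (ENNReal.ofReal_le_ofReal (min_le_left _ _)) hp₁.2
    · have h1 : 0 < min p₁ (a + ε/2) := lt_of_lt_of_le ha0 (le_min hp₁.1.le (by linarith))
      have h2 : min p₁ (a + ε/2) ≤ a + ε/2 := min_le_right _ _
      have h3 : 1/(a + ε/2) ≤ 1/(min p₁ (a + ε/2)) := one_div_le_one_div_of_le h1 h2
      have h4 : 1/a - ε/2 ≤ 1/(a + ε/2) := by
        rw [div_sub_div _ _ ha0.ne' (by norm_num : (2:ℝ) ≠ 0), div_le_div_iff₀ (by positivity)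
          (by positivity)]
        have ha2 : (1:ℝ) ≤ a*a := by nlinarith
        nlinarith [mul_nonneg hε.le (sub_nonneg.2 ha2), mul_nonneg ha0.le (mul_self_nonneg ε)]
      linarith
  have hψ₀pos : 0 < ψ p₀ := hpos p₀ hp₀S
  have h0p₀ : 0 < p₀ := ha0.trans hp₀S.1
  set C : ℝ := max 1 (max ((2/ε) * |Real.log m|) ((4/ε) * |Real.log (ψ p₀)|)) with hC
  filter_upwards [eventually_ge_atTop (2:ℝ),
    Real.tendsto_log_atTop.eventually (eventually_ge_atTop C)] with s hs2 hsC
  have hs1 : (1:ℝ) ≤ s := by linarith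
  have hs0 : (0:ℝ) < s := by linarith
  have hlog1 : 1 ≤ Real.log s := le_trans (le_max_left _ _) hsC
  have hlogpos : 0 < Real.log s := by linarith
  have hlm : |Real.log m| ≤ ε/2 * Real.log s := by
    have h := le_trans (le_trans (le_max_left _ _) (le_max_right 1 _)) hsC
    have := mul_le_mul_of_nonneg_left h (le_of_lt (by positivity : (0:ℝ) < ε/2))
    calc |Real.log m| = ε/2 * ((2/ε) * |Real.log m|) := by field_simp
      _ ≤ ε/2 * Real.log s := this
  have hlψ : |Real.log (ψ p₀)| ≤ ε/4 * Real.log s := by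
    have h := le_trans (le_trans (le_max_right _ _) (le_max_right 1 _)) hsC
    have := mul_le_mul_of_nonneg_left h (le_of_lt (by positivity : (0:ℝ) < ε/4))
    calc |Real.log (ψ p₀)| = ε/4 * ((4/ε) * |Real.log (ψ p₀)|) := by field_simp
      _ ≤ ε/4 * Real.log s := this
  have hxpos : 0 < s ^ (1/p₀) / ψ p₀ := div_pos (Real.rpow_pos_of_pos hs0 _) hψ₀pos
  have hFlb := hL s hs1 p₀ hp₀S
  have hFub := hU s hs1
  have hFpos : 0 < fundR a b ψ s := lt_of_lt_of_le hxpos hFlb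
  have logU : Real.log (fundR a b ψ s) ≤ 1/a * Real.log s - Real.log m := by
    calc Real.log (fundR a b ψ s) ≤ Real.log (s ^ (1/a) / m) := Real.log_le_log hFpos hFub
      _ = 1/a * Real.log s - Real.log m := by
          rw [Real.log_div (ne_of_gt (Real.rpow_pos_of_pos hs0 _)) hm.ne',
            Real.log_rpow hs0]
  have logL : 1/p₀ * Real.log s - Real.log (ψ p₀) ≤ Real.log (fundR a b ψ s) := by
    calc 1/p₀ * Real.log s - Real.log (ψ p₀)
        = Real.log (s ^ (1/p₀) / ψ p₀) := by
          rw [Real.log_div (ne_of_gt (Real.rpow_pos_of_pos hs0 _)) hψ₀pos.ne',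
            Real.log_rpow hs0]
      _ ≤ Real.log (fundR a b ψ s) := Real.log_le_log hxpos hFlb
  rw [Real.dist_eq, abs_sub_lt_iff]
  constructor
  · rw [div_sub' hlogpos.ne', div_lt_iff₀ hlogpos]
    have h1 : -Real.log m ≤ |Real.log m| := neg_le_abs _
    nlinarith
  · rw [sub_div' hlogpos.ne', div_lt_iff₀ hlogpos]
    have h1 : Real.log (ψ p₀) ≤ |Real.log (ψ p₀)| := le_abs_self _
    have h2 : 0 ≤ (1/p₀ - (1/a - ε/2)) * Real.log s :=
      mul_nonneg (by linarith) hlogpos.le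
    nlinarith
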